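/- There exist constants δ ∈ (0,1) and M > 0 such that for every C ∈ ℝ^n and every index j with C_j = max{C_1, …, C_n} and C_j ≥ M, one has F_j(C) ≥ δ C_j. -/

import Mathlib

open MeasureTheory Set
open scoped Classical ENNReal

/-- `f_j^{(C)}(t) = C_j - (t - x_j)^2`. -/
noncomputable def fj (n : ℕ) (x C : Fin n → ℝ) (j : Fin n) (t : ℝ) : ℝ :=
  C j - (t - x j) ^ 2

/-- `f^{(C)}(t) = max{f_1^{(C)}(t), …, f_n^{(C)}(t), 0}`. -/
noncomputable def fmax (n : ℕ) (x C : Fin n → ℝ) (t : ℝ) : ℝ :=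
  max (⨆ j : Fin n, fj n x C j t) 0

/-- `E_j^{(C)} = {t : f_j^{(C)}(t) = f^{(C)}(t)}`. -/
def Ej (n : ℕ) (x C : Fin n → ℝ) (j : Fin n) : Set ℝ :=
  {t | fj n x C j t = fmax n x C t}

/-- `F_j(C) = ∫_{E_j^{(C)}} f^{(C)}` if `E_j^{(C)} ≠ ∅`, else `0`. -/
noncomputable def Fj (n : ℕ) (x C : Fin n → ℝ) (j : Fin n) : ℝ :=
  if (Ej n x C j).Nonempty then ∫ t in Ej n x C j, fmax n x C t else 0

/-- `F(C) = (F_1(C), …, F_n(C))`. -/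
noncomputable def Fvec (n : ℕ) (x C : Fin n → ℝ) : Fin n → ℝ :=
  fun j => Fj n x C j

/-- `𝔾 = {C : F_j(C) > 0 for all j}`. -/
def Gset (n : ℕ) (x : Fin n → ℝ) : Set (Fin n → ℝ) :=
  {C | ∀ j, 0 < Fj n x C j}

/-- `γ_{ij}(C) = (C_i - C_j)/(2(x_j - x_i)) + (x_i + x_j)/2`. -/
noncomputable def gam (n : ℕ) (x C : Fin n → ℝ) (i j : Fin n) : ℝ :=
  (C i - C j) / (2 * (x j - x i)) + (x i + x j) / 2

/-- There exist `δ ∈ (0,1)` and `M > 0` such that whenever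
`C_j = max{C_1, …, C_n} ≥ M`, one has `F_j(C) ≥ δ C_j`. -/
theorem stmt_14 (n : ℕ) (hn : 1 ≤ n) (x : Fin n → ℝ) (hx : StrictMono x) :
    ∃ δ ∈ Set.Ioo (0 : ℝ) 1, ∃ M : ℝ, 0 < M ∧
      ∀ C : Fin n → ℝ, ∀ j : Fin n, (∀ i, C i ≤ C j) → M ≤ C j →
        δ * C j ≤ Fj n x C j := by
  obtain ⟨r, hr0, hr1, hrsep⟩ :
      ∃ r : ℝ, 0 < r ∧ r ≤ 1 ∧ ∀ i k : Fin n, i ≠ k → 2 * r ≤ |x i - x k| := by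
    by_cases hs : (Finset.univ.filter fun p : Fin n × Fin n => p.1 ≠ p.2).Nonempty
    · set s := (Finset.univ.filter fun p : Fin n × Fin n => p.1 ≠ p.2).image
        fun p => |x p.1 - x p.2| with hsdef
      have hsne : s.Nonempty := hs.image _
      have hmin : 0 < s.min' hsne := by
        obtain ⟨p, hp, hpe⟩ := Finset.mem_image.mp (Finset.min'_mem s hsne)
        rw [Finset.mem_filter] at hp
        have : x p.1 ≠ x p.2 := fun h => hp.2 (hx.injective h)
        have hpos : 0 < |x p.1 - x p.2| := abs_pos.mpr (sub_ne_zero.mpr this)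
        rwa [hpe] at hpos
      refine ⟨min 1 (s.min' hsne / 2), by positivity, min_le_left _ _, ?_⟩
      intro i k hik
      have hmem : |x i - x k| ∈ s :=
        Finset.mem_image.mpr ⟨(i, k), Finset.mem_filter.mpr ⟨Finset.mem_univ _, hik⟩, rfl⟩
      have := Finset.min'_le s _ hmem
      have h2 : 2 * min 1 (s.min' hsne / 2) ≤ 2 * (s.min' hsne / 2) := by
        have := min_le_right 1 (s.min' hsne / 2); linarith
      linarith
    · exact ⟨1, one_pos, le_refl 1, fun i k hik =>
        absurd ⟨(i, k), Finset.mem_filter.mpr ⟨Finset.mem_univ _, hik⟩⟩ hs⟩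
  refine ⟨r / 2, ⟨by linarith, by linarith⟩, 2, by norm_num, ?_⟩
  intro C j hmaxC hM
  haveI : Nonempty (Fin n) := ⟨⟨0, hn⟩⟩
  have hCj : (2 : ℝ) ≤ C j := hM
  -- the interval is contained in Ej
  have hIsub : Icc (x j) (x j + r) ⊆ Ej n x C j := by
    intro t ht
    obtain ⟨ht1, ht2⟩ := ht
    have hle : ∀ i, fj n x C i t ≤ fj n x C j t := by
      intro i
      rcases eq_or_ne i j with h | h
      · rw [h]
      · unfold fj
        have hmi := hmaxC i
        rcases (hx.injective.ne h).lt_or_gt with hxi | hxi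
        · nlinarith
        · have hsep := hrsep i j h
          rw [abs_of_pos (by linarith)] at hsep
          nlinarith
    have h0 : 0 ≤ fj n x C j t := by unfold fj; nlinarith
    have hbdd : BddAbove (Set.range fun i => fj n x C i t) :=
      Set.Finite.bddAbove (Set.finite_range _)
    have hsup : (⨆ i, fj n x C i t) = fj n x C j t :=
      le_antisymm (ciSup_le hle) (le_ciSup hbdd j)
    show fj n x C j t = fmax n x C t
    unfold fmax
    rw [hsup, max_eq_left h0]
  have hEne : (Ej n x C j).Nonempty := ⟨x j, hIsub ⟨le_refl _, by linarith⟩⟩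
  have hmfj : ∀ i : Fin n, Measurable (fj n x C i) := by
    intro i; unfold fj; fun_prop
  have hmfmax : Measurable (fmax n x C) :=
    (Measurable.iSup fun i => hmfj i).max measurable_const
  have hEmeas : MeasurableSet (Ej n x C j) :=
    measurableSet_eq_fun (hmfj j) hmfmax
  have hfnonneg : ∀ t, 0 ≤ fmax n x C t := fun t => le_max_right _ _
  have hfle : ∀ t, fmax n x C t ≤ C j := by
    intro t
    refine max_le (ciSup_le fun i => ?_) (by linarith)
    unfold fj; nlinarith [sq_nonneg (t - x i), hmaxC i]
  have hEsub : Ej n x C j ⊆ Icc (x j - Real.sqrt (C j)) (x j + Real.sqrt (C j)) := by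
    intro t ht
    have h0 : 0 ≤ fj n x C j t := by
      rw [show fj n x C j t = fmax n x C t from ht]; exact hfnonneg t
    have hsq : (t - x j) ^ 2 ≤ C j := by unfold fj at h0; linarith
    have habs : |t - x j| ≤ Real.sqrt (C j) := by
      rw [← Real.sqrt_sq_eq_abs]; exact Real.sqrt_le_sqrt hsq
    obtain ⟨h1, h2⟩ := abs_le.mp habs
    exact ⟨by linarith, by linarith⟩
  have hμE : volume (Ej n x C j) ≠ ∞ := by
    refine ne_top_of_le_ne_top ?_ (measure_mono hEsub)
    rw [Real.volume_Icc]; exact ENNReal.ofReal_ne_top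
  have hInt : IntegrableOn (fmax n x C) (Ej n x C j) volume := by
    refine Measure.integrableOn_of_bounded (M := C j) hμE hmfmax.aestronglyMeasurable ?_
    filter_upwards with t
    rw [Real.norm_eq_abs, abs_of_nonneg (hfnonneg t)]
    exact hfle t
  rw [Fj, if_pos hEne]
  have hstep1 : ∫ t in Icc (x j) (x j + r), fmax n x C t ≤ ∫ t in Ej n x C j, fmax n x C t := by
    refine setIntegral_mono_set hInt ?_ (Filter.Eventually.of_forall hIsub)
    filter_upwards with t using hfnonneg t
  have hlow : ∀ t ∈ Icc (x j) (x j + r), C j - 1 ≤ fmax n x C t := by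
    intro t ht
    have := hIsub ht
    rw [← show fj n x C j t = fmax n x C t from this]
    obtain ⟨ht1, ht2⟩ := ht
    unfold fj; nlinarith
  have hstep2 : (C j - 1) * r ≤ ∫ t in Icc (x j) (x j + r), fmax n x C t := by
    have := setIntegral_ge_of_const_le_real (μ := volume) measurableSet_Icc
      (by rw [Real.volume_Icc]; exact ENNReal.ofReal_ne_top) hlow
      (hInt.mono_set hIsub)
    rwa [measureReal_def, Real.volume_Icc, ENNReal.toReal_ofReal (by linarith), show x j + r - x j = r by ring]
      at this
  nlinarith
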